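/- Let Λ : ℍ → ℍ be ℝ-linear and let e₁, e₂, e₃ ∈ 𝕊 be pairwise orthogonal. The following are equivalent: (1) Λ is regular, i.e., Λ(1)·1 + Λ(i)·i + Λ(j)·j + Λ(k)·k = 0; (2) Λ(x) = −(Λ(e₁·x)·e₁ + Λ(e₂·x)·e₂ + Λ(e₃·x)·e₃) for all x ∈ ℍ; (3) Λ(x) + Λ(e₁·x)·e₁ + Λ(e₂·x)·e₂ + Λ(e₃·x)·e₃ = 0 for all x ∈ ℍ; (4) Λ(1) + Λ(e₁)·e₁ + Λ(e₂)·e₂ + Λ(e₃)·e₃ = 0. -/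

import Mathlib

noncomputable section

open Quaternion Classical

/-- The imaginary unit `i`. -/
def qi : ℍ[ℝ] := ⟨0, 1, 0, 0⟩
/-- The imaginary unit `j`. -/
def qj : ℍ[ℝ] := ⟨0, 0, 1, 0⟩
/-- The imaginary unit `k`. -/
def qk : ℍ[ℝ] := ⟨0, 0, 0, 1⟩

/-- The 2-sphere of quaternionic imaginary units. -/
def sph : Set ℍ[ℝ] := {x | x ^ 2 = -1}

/-- The real scalar product `⟨x, y⟩ = Re (x * ȳ)` on `ℍ`. -/
def qip (x y : ℍ[ℝ]) : ℝ := (x * star y).re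

/-- `‖Λ‖²`, the squared norm of a real linear map `Λ : ℍ → ℍ`. -/
def normSqL (Λ : ℍ[ℝ] →ₗ[ℝ] ℍ[ℝ]) : ℝ :=
  (1 / 4) * (normSq (Λ 1) + normSq (Λ qi) + normSq (Λ qj) + normSq (Λ qk))

/-- The bilinear expression `A_Λ(p, q) = ⟨R_p ∘ Λ, Λ ∘ L_q⟩`. -/
def Aform (Λ : ℍ[ℝ] →ₗ[ℝ] ℍ[ℝ]) (p q : ℍ[ℝ]) : ℝ :=
  (1 / 4) * (qip (Λ 1 * p) (Λ (q * 1)) + qip (Λ qi * p) (Λ (q * qi))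
    + qip (Λ qj * p) (Λ (q * qj)) + qip (Λ qk * p) (Λ (q * qk)))

/-- The trace of the bilinear form `A_Λ` on `Im ℍ`. -/
def trA (Λ : ℍ[ℝ] →ₗ[ℝ] ℍ[ℝ]) : ℝ := Aform Λ qi qi + Aform Λ qj qj + Aform Λ qk qk

/-- The bilinear form `M_Λ(p,q) = (1/2) tr(A_Λ) ⟨p,q⟩ - (1/2) A_Λ(p,q)`. -/
def Mform (Λ : ℍ[ℝ] →ₗ[ℝ] ℍ[ℝ]) (p q : ℍ[ℝ]) : ℝ :=
  (1 / 2) * trA Λ * qip p q - (1 / 2) * Aform Λ p q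

/-- `Λ` is complex linear of type `(g, h)` if `Λ(g x) = Λ(x) h` for all `x`. -/
def IsCLType (Λ : ℍ[ℝ] →ₗ[ℝ] ℍ[ℝ]) (g h : ℍ[ℝ]) : Prop := ∀ x, Λ (g * x) = Λ x * h

/-- `Λ` is regular (right Fueter-regular). -/
def IsReg (Λ : ℍ[ℝ] →ₗ[ℝ] ℍ[ℝ]) : Prop :=
  Λ 1 * 1 + Λ qi * qi + Λ qj * qj + Λ qk * qk = 0

/-- The antiautomorphism-type map `θ̄_p(x) = p x̄ p⁻¹` as a real linear map. -/
def thetaBar (p : ℍ[ℝ]) : ℍ[ℝ] →ₗ[ℝ] ℍ[ℝ] where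
  toFun x := p * star x * p⁻¹
  map_add' x y := by simp [star_add, mul_add, add_mul]
  map_smul' r x := by simp [mul_smul_comm, smul_mul_assoc]

/-- Left multiplication by a quaternion, as a real linear map. -/
def lmul (a : ℍ[ℝ]) : ℍ[ℝ] →ₗ[ℝ] ℍ[ℝ] := LinearMap.mulLeft ℝ a

/-- The size `s(Λ)` of a (regular) real linear map: the minimal number of nonzero
coefficients `λ₁, λ₂, λ₃` in a decomposition `Λ = λ₁ θ̄_{e₁} + λ₂ θ̄_{e₂} + λ₃ θ̄_{e₃}`,
over all triples of pairwise orthogonal imaginary units `e₁, e₂, e₃`. -/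
def qsize (Λ : ℍ[ℝ] →ₗ[ℝ] ℍ[ℝ]) : ℕ :=
  sInf { n | ∃ e₁ e₂ e₃ l₁ l₂ l₃ : ℍ[ℝ],
    e₁ ∈ sph ∧ e₂ ∈ sph ∧ e₃ ∈ sph ∧
    qip e₁ e₂ = 0 ∧ qip e₁ e₃ = 0 ∧ qip e₂ e₃ = 0 ∧
    Λ = (lmul l₁).comp (thetaBar e₁) + (lmul l₂).comp (thetaBar e₂)
        + (lmul l₃).comp (thetaBar e₃) ∧
    n = (if l₁ = 0 then 0 else 1) + (if l₂ = 0 then 0 else 1) + (if l₃ = 0 then 0 else 1) }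

/-- The 3×3 matrix of `M_Λ` with respect to the basis `(i, j, k)` of `Im ℍ`. -/
def Mmat (Λ : ℍ[ℝ] →ₗ[ℝ] ℍ[ℝ]) : Matrix (Fin 3) (Fin 3) ℝ :=
  Matrix.of fun α β => Mform Λ (![qi, qj, qk] α) (![qi, qj, qk] β)

/-- The basis `(1, i, j, k)` of `ℍ` over `ℝ`. -/
def qBasis : Module.Basis (Fin 4) ℝ ℍ[ℝ] := QuaternionAlgebra.basisOneIJK (-1) 0 (-1)

/-- The adjugate `Λ^adjg` of a real linear map `Λ : ℍ → ℍ`: the linear map whose matrix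
with respect to the basis `(1, i, j, k)` is the adjugate of the matrix of `Λ`. -/
def adjg (Λ : ℍ[ℝ] →ₗ[ℝ] ℍ[ℝ]) : ℍ[ℝ] →ₗ[ℝ] ℍ[ℝ] :=
  Matrix.toLin qBasis qBasis (Matrix.adjugate (LinearMap.toMatrix qBasis qBasis Λ))

/-- The embedding `ℂ → ℍ`, `x + √-1 y ↦ x + y i`. -/
def iotaC (z : ℂ) : ℍ[ℝ] := ⟨z.re, z.im, 0, 0⟩

/-- The map `L_Λ : Im ℍ → Im ℍ` representing `A_Λ`: `⟨p, L_Λ(q)⟩ = A_Λ(p, q)`. -/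
def LLam (Λ : ℍ[ℝ] →ₗ[ℝ] ℍ[ℝ]) (q : ℍ[ℝ]) : ℍ[ℝ] :=
  Aform Λ qi q • qi + Aform Λ qj q • qj + Aform Λ qk q • qk

/-- The quadratic form `Q_Λ(q) = |L_Λ(q)|²`. -/
def QLam (Λ : ℍ[ℝ] →ₗ[ℝ] ℍ[ℝ]) (q : ℍ[ℝ]) : ℝ := normSq (LLam Λ q)


/-- Auxiliary: membership in the sphere gives vanishing real part and unit imaginary part. -/
lemma sph_mem' {x : ℍ[ℝ]} (h : x ∈ sph) : x.re = 0 ∧ x.imI^2 + x.imJ^2 + x.imK^2 = 1 := by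
  have h' : x^2 = -1 := h
  rw [sq] at h'
  have hre := congrArg QuaternionAlgebra.re h'
  have hI := congrArg QuaternionAlgebra.imI h'
  have hJ := congrArg QuaternionAlgebra.imJ h'
  have hK := congrArg QuaternionAlgebra.imK h'
  simp [Quaternion.re_mul, Quaternion.imI_mul, Quaternion.imJ_mul, Quaternion.imK_mul]
    at hre hI hJ hK
  have h0 : x.re = 0 := by
    nlinarith [sq_nonneg x.re, sq_nonneg x.imI, sq_nonneg x.imJ, sq_nonneg x.imK]
  exact ⟨h0, by nlinarith [hre]⟩

/-- Auxiliary: explicit formula for the scalar product. -/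
lemma qip_formula' (x y : ℍ[ℝ]) :
    qip x y = x.re*y.re + x.imI*y.imI + x.imJ*y.imJ + x.imK*y.imK := by
  simp [qip, Quaternion.re_mul]

/-- Auxiliary: decomposition of a quaternion along the basis. -/
lemma hx_decomp' (y : ℍ[ℝ]) : y = y.re • (1:ℍ[ℝ]) + y.imI • qi + y.imJ • qj + y.imK • qk := by
  ext <;> simp [Quaternion.re_smul, Quaternion.imI_smul, Quaternion.imJ_smul, Quaternion.imK_smul] <;> simp [qi, qj, qk]

/-- Auxiliary: a linear map is determined by its values on the basis. -/
lemma lin_decomp' (Λ : ℍ[ℝ] →ₗ[ℝ] ℍ[ℝ]) (y : ℍ[ℝ]) :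
    Λ y = y.re • Λ 1 + y.imI • Λ qi + y.imJ • Λ qj + y.imK • Λ qk := by
  conv_lhs => rw [hx_decomp' y]
  simp

/-- Auxiliary key identity over the standard basis. -/
lemma key2' (Λ : ℍ[ℝ] →ₗ[ℝ] ℍ[ℝ]) (x : ℍ[ℝ]) :
    Λ x + Λ (qi*x) * qi + Λ (qj*x) * qj + Λ (qk*x) * qk
      = (Λ 1 + Λ qi * qi + Λ qj * qj + Λ qk * qk) * star x := by
  rw [lin_decomp' Λ x, lin_decomp' Λ (qi*x), lin_decomp' Λ (qj*x), lin_decomp' Λ (qk*x)]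
  ext <;>
    simp [Quaternion.re_mul, Quaternion.imI_mul, Quaternion.imJ_mul,
      Quaternion.imK_mul, Quaternion.re_smul, Quaternion.imI_smul, Quaternion.imJ_smul, Quaternion.imK_smul] <;> simp [qi, qj, qk] <;> ring

/-- Auxiliary: column orthonormality from row orthonormality for a 3x3 real matrix. -/
lemma colOrtho' {p1 p2 p3 q1 q2 q3 r1 r2 r3 : ℝ}
    (hp : p1^2+p2^2+p3^2 = 1) (hq : q1^2+q2^2+q3^2 = 1) (hr : r1^2+r2^2+r3^2 = 1)
    (hpq : p1*q1+p2*q2+p3*q3 = 0) (hpr : p1*r1+p2*r2+p3*r3 = 0)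
    (hqr : q1*r1+q2*r2+q3*r3 = 0) :
    (p1*p1+q1*q1+r1*r1 = 1 ∧ p1*p2+q1*q2+r1*r2 = 0) ∧
    (p1*p3+q1*q3+r1*r3 = 0 ∧ p2*p2+q2*q2+r2*r2 = 1) ∧
    (p2*p3+q2*q3+r2*r3 = 0 ∧ p3*p3+q3*q3+r3*r3 = 1) := by
  have hR : (!![p1,p2,p3;q1,q2,q3;r1,r2,r3] : Matrix (Fin 3) (Fin 3) ℝ)
      * !![p1,q1,r1;p2,q2,r2;p3,q3,r3] = 1 := by
    ext i j
    fin_cases i <;> fin_cases j <;>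
      simp [Matrix.mul_apply, Fin.sum_univ_three, Matrix.one_apply] <;> nlinarith
  have hR' := mul_eq_one_comm.mp hR
  have c : ∀ i j, ((!![p1,q1,r1;p2,q2,r2;p3,q3,r3] : Matrix (Fin 3) (Fin 3) ℝ)
      * !![p1,p2,p3;q1,q2,q3;r1,r2,r3]) i j = (1 : Matrix (Fin 3) (Fin 3) ℝ) i j :=
    fun i j => by rw [hR']
  have c11 := c 0 0; have c12 := c 0 1; have c13 := c 0 2
  have c22 := c 1 1; have c23 := c 1 2; have c33 := c 2 2
  simp [Matrix.mul_apply, Fin.sum_univ_three, Matrix.one_apply] at c11 c12 c13 c22 c23 c33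
  exact ⟨⟨by linarith, by linarith⟩, ⟨by linarith, by linarith⟩, ⟨by linarith, by linarith⟩⟩

/-- Auxiliary abstract module computation. -/
lemma auxM' {M : Type*} [AddCommGroup M] [Module ℝ M]
    {Z A B C D E F G H I : M} {p1 p2 p3 q1 q2 q3 r1 r2 r3 : ℝ}
    (c11 : p1*p1+q1*q1+r1*r1 = 1) (c12 : p1*p2+q1*q2+r1*r2 = 0)
    (c13 : p1*p3+q1*q3+r1*r3 = 0) (c22 : p2*p2+q2*q2+r2*r2 = 1)
    (c23 : p2*p3+q2*q3+r2*r3 = 0) (c33 : p3*p3+q3*q3+r3*r3 = 1) :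
    Z +
          (p1 • p1 • A + p1 • p2 • B + p1 • p3 • C +
              (p2 • p1 • D + p2 • p2 • E + p2 • p3 • F) +
            (p3 • p1 • G + p3 • p2 • H + p3 • p3 • I)) +
        (q1 • q1 • A + q1 • q2 • B + q1 • q3 • C +
            (q2 • q1 • D + q2 • q2 • E + q2 • q3 • F) +
          (q3 • q1 • G + q3 • q2 • H + q3 • q3 • I)) +
      (r1 • r1 • A + r1 • r2 • B + r1 • r3 • C +
          (r2 • r1 • D + r2 • r2 • E + r2 • r3 • F) +
        (r3 • r1 • G + r3 • r2 • H + r3 • r3 • I)) =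
    Z + A + E + I := by
  match_scalars <;> linarith


/-- Characterizations of regularity of a real linear map `Λ : ℍ → ℍ` in terms of any
pairwise orthogonal `e₁, e₂, e₃ ∈ 𝕊`. -/
theorem stmt5 (Λ : ℍ[ℝ] →ₗ[ℝ] ℍ[ℝ]) (e₁ e₂ e₃ : ℍ[ℝ])
    (h1 : e₁ ∈ sph) (h2 : e₂ ∈ sph) (h3 : e₃ ∈ sph)
    (h12 : qip e₁ e₂ = 0) (h13 : qip e₁ e₃ = 0) (h23 : qip e₂ e₃ = 0) :
    List.TFAE [IsReg Λ,
      ∀ x, Λ x = -(Λ (e₁ * x) * e₁ + Λ (e₂ * x) * e₂ + Λ (e₃ * x) * e₃),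
      ∀ x, Λ x + Λ (e₁ * x) * e₁ + Λ (e₂ * x) * e₂ + Λ (e₃ * x) * e₃ = 0,
      Λ 1 + Λ e₁ * e₁ + Λ e₂ * e₂ + Λ e₃ * e₃ = 0] := by
  obtain ⟨hre1, hs1⟩ := sph_mem' h1
  obtain ⟨hre2, hs2⟩ := sph_mem' h2
  obtain ⟨hre3, hs3⟩ := sph_mem' h3
  have d12 : e₁.imI*e₂.imI + e₁.imJ*e₂.imJ + e₁.imK*e₂.imK = 0 := by
    have h := h12; rw [qip_formula', hre1, hre2] at h; linarith
  have d13 : e₁.imI*e₃.imI + e₁.imJ*e₃.imJ + e₁.imK*e₃.imK = 0 := by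
    have h := h13; rw [qip_formula', hre1, hre3] at h; linarith
  have d23 : e₂.imI*e₃.imI + e₂.imJ*e₃.imJ + e₂.imK*e₃.imK = 0 := by
    have h := h23; rw [qip_formula', hre2, hre3] at h; linarith
  obtain ⟨⟨c11, c12⟩, ⟨c13, c22⟩, ⟨c23, c33⟩⟩ := colOrtho' hs1 hs2 hs3 d12 d13 d23
  have he1 : e₁ = e₁.imI • qi + e₁.imJ • qj + e₁.imK • qk := by
    ext <;> simp [hre1, Quaternion.re_smul, Quaternion.imI_smul, Quaternion.imJ_smul, Quaternion.imK_smul] <;> simp [qi, qj, qk]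
  have he2 : e₂ = e₂.imI • qi + e₂.imJ • qj + e₂.imK • qk := by
    ext <;> simp [hre2, Quaternion.re_smul, Quaternion.imI_smul, Quaternion.imJ_smul, Quaternion.imK_smul] <;> simp [qi, qj, qk]
  have he3 : e₃ = e₃.imI • qi + e₃.imJ • qj + e₃.imK • qk := by
    ext <;> simp [hre3, Quaternion.re_smul, Quaternion.imI_smul, Quaternion.imJ_smul, Quaternion.imK_smul] <;> simp [qi, qj, qk]
  have key : ∀ x, Λ x + Λ (e₁ * x) * e₁ + Λ (e₂ * x) * e₂ + Λ (e₃ * x) * e₃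
      = Λ x + Λ (qi*x) * qi + Λ (qj*x) * qj + Λ (qk*x) * qk := by
    intro x
    rw [he1, he2, he3]
    simp only [add_mul, smul_mul_assoc, map_add, map_smul, mul_add, mul_smul_comm, smul_add]
    exact auxM' c11 c12 c13 c22 c23 c33
  tfae_have 1 → 3 := by
    intro hreg x
    have hreg' : Λ 1 + Λ qi * qi + Λ qj * qj + Λ qk * qk = 0 := by
      have h : Λ 1 * 1 + Λ qi * qi + Λ qj * qj + Λ qk * qk = 0 := hreg
      rwa [mul_one] at h
    rw [key x, key2' Λ x, hreg', zero_mul]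
  tfae_have 3 → 2 := by
    intro h x
    refine eq_neg_of_add_eq_zero_left ?_
    rw [← h x]; abel
  tfae_have 2 → 3 := by
    intro h x
    rw [h x]; abel
  tfae_have 3 → 4 := by
    intro h
    have h1' := h 1
    simpa only [mul_one] using h1'
  tfae_have 4 → 1 := by
    intro h4
    show Λ 1 * 1 + Λ qi * qi + Λ qj * qj + Λ qk * qk = 0
    rw [mul_one]
    have k1 := key 1
    simp only [mul_one] at k1
    rw [← k1]
    exact h4
  tfae_finish


end
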